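/- arXiv:2103.07846 — 9 statements merged into one kernel-verified Lean document; each statement's English description precedes it below -/
import Mathlib

section
/- Let E[k+1] = E[k] + Δt·η_c·P_c[k] − (Δt/η_d)·P_d[k] with E[0]=E_0, and let E^r be defined by the same recursion with inputs P_c^r, P_d^r. If for every k, P_c[k]−P_d[k] = P_c^r[k]−P_d^r[k], P_c[k]·P_d[k]=0, all inputs are nonnegative, Δt>0, and 0<η_c≤1≤1/η_d (i.e., η_c,η_d∈(0,1]), then E^r[k] ≤ E[k] for all k. -/
/-- Relaxed trajectory underestimates the exact trajectory. -/
theorem relaxed_le_exact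
    (Δt ηc ηd E0 : ℝ) (Pc Pd Pcr Pdr E Er : ℕ → ℝ)
    (hΔt : 0 < Δt) (hηc : 0 < ηc) (hηc1 : ηc ≤ 1)
    (hηd : 0 < ηd) (hηd1 : ηd ≤ 1)
    (hnet : ∀ k, Pc k - Pd k = Pcr k - Pdr k)
    (hcomp : ∀ k, Pc k * Pd k = 0)
    (hPc : ∀ k, 0 ≤ Pc k) (hPd : ∀ k, 0 ≤ Pd k)
    (hPcr : ∀ k, 0 ≤ Pcr k) (hPdr : ∀ k, 0 ≤ Pdr k)
    (hE0 : E 0 = E0) (hEr0 : Er 0 = E0)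
    (hE : ∀ k, E (k+1) = E k + Δt * ηc * Pc k - (Δt / ηd) * Pd k)
    (hEr : ∀ k, Er (k+1) = Er k + Δt * ηc * Pcr k - (Δt / ηd) * Pdr k) :
    ∀ k, Er k ≤ E k := by
  intro k
  induction k with
  | zero => rw [hE0, hEr0]
  | succ k ih =>
    rw [hE, hEr]
    have hnetk := hnet k
    have ht : 0 ≤ Pdr k - Pd k := by
      rcases mul_eq_zero.mp (hcomp k) with h | h
      · have := hPcr k; have := hPd k; linarith [hnet k, h]
      · have := hPdr k; linarith [h]
    have hc : ηc * ηd ≤ 1 := by nlinarith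
    have h1 : ηc ≤ 1 / ηd := by rw [le_div_iff₀ hηd]; linarith
    have hstep : Δt * ηc * Pcr k - (Δt / ηd) * Pdr k ≤
        Δt * ηc * Pc k - (Δt / ηd) * Pd k := by
      have hcr : Pcr k = Pc k + (Pdr k - Pd k) := by linarith
      rw [hcr]
      have : Δt * ηc * (Pdr k - Pd k) ≤ (Δt / ηd) * (Pdr k - Pd k) := by
        apply mul_le_mul_of_nonneg_right _ ht
        rw [div_eq_mul_inv]
        have : ηc ≤ ηd⁻¹ := by rwa [← one_div]
        nlinarith
      ring_nf
      ring_nf at this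
      linarith
    linarith
end

section
/- Under the hypotheses of the two previous orderings combined (same net power, complementarity for the exact inputs, nonnegative inputs, Δt>0, η_c ≤ η ≤ 1/η_d with η_c,η_d∈(0,1]), the three SoC trajectories are ordered: E^r[k] ≤ E[k] ≤ E^s[k] for all k ∈ {0,…,T}. -/
/-- Ordering of the relaxed, exact, and simplified SoC trajectories. -/
theorem trajectories_ordered
    (Δt ηc ηd η E0 : ℝ) (T : ℕ) (Pc Pd Pcr Pdr E Er Es : ℕ → ℝ)
    (hΔt : 0 < Δt) (hηc : 0 < ηc) (hηc1 : ηc ≤ 1)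
    (hηd : 0 < ηd) (hηd1 : ηd ≤ 1)
    (hη1 : ηc ≤ η) (hη2 : η ≤ 1 / ηd)
    (hnet : ∀ k, Pc k - Pd k = Pcr k - Pdr k)
    (hcomp : ∀ k, Pc k * Pd k = 0)
    (hPc : ∀ k, 0 ≤ Pc k) (hPd : ∀ k, 0 ≤ Pd k)
    (hPcr : ∀ k, 0 ≤ Pcr k) (hPdr : ∀ k, 0 ≤ Pdr k)
    (hE0 : E 0 = E0) (hEr0 : Er 0 = E0) (hEs0 : Es 0 = E0)
    (hE : ∀ k, E (k+1) = E k + Δt * ηc * Pc k - (Δt / ηd) * Pd k)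
    (hEr : ∀ k, Er (k+1) = Er k + Δt * ηc * Pcr k - (Δt / ηd) * Pdr k)
    (hEs : ∀ k, Es (k+1) = Es k + η * Δt * (Pc k - Pd k)) :
    ∀ k ≤ T, Er k ≤ E k ∧ E k ≤ Es k := by
  have hcd : ηc ≤ 1 / ηd := by
    have h1 : (1:ℝ) ≤ 1 / ηd := by rw [le_div_iff₀ hηd]; linarith
    linarith
  have key : ∀ k, Er k ≤ E k ∧ E k ≤ Es k := by
    intro k
    induction k with
    | zero => simp [hE0, hEr0, hEs0]
    | succ n ih =>
      obtain ⟨h1, h2⟩ := ih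
      constructor
      · rw [hE n, hEr n]
        have hs1 : 0 ≤ Pcr n - Pc n := by
          rcases mul_eq_zero.mp (hcomp n) with h | h
          · have := hnet n; have := hPdr n; have := hPd n; linarith [hPcr n]
          · have := hnet n; have := hPdr n; linarith [hPcr n]
        have hs2 : Pcr n - Pc n = Pdr n - Pd n := by linarith [hnet n]
        have hcoef : Δt * ηc ≤ Δt / ηd := by
          rw [div_eq_mul_inv, ← one_div]
          exact mul_le_mul_of_nonneg_left hcd hΔt.le
        have hkey : Δt * ηc * (Pcr n - Pc n) ≤ (Δt / ηd) * (Pdr n - Pd n) := by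
          rw [← hs2]; exact mul_le_mul_of_nonneg_right hcoef hs1
        nlinarith [hkey]
      · rw [hE n, hEs n]
        rcases mul_eq_zero.mp (hcomp n) with h | h
        · have hd : η * Δt * Pd n ≤ (Δt / ηd) * Pd n := by
            have : η * Δt ≤ Δt / ηd := by
              rw [div_eq_mul_inv, ← one_div]
              calc η * Δt = Δt * η := by ring
                _ ≤ Δt * (1/ηd) := mul_le_mul_of_nonneg_left hη2 hΔt.le
            exact mul_le_mul_of_nonneg_right this (hPd n)
          rw [h]; nlinarith [hd]
        · have hc : Δt * ηc * Pc n ≤ η * Δt * Pc n := by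
            have : Δt * ηc ≤ η * Δt := by nlinarith
            exact mul_le_mul_of_nonneg_right this (hPc n)
          rw [h]; nlinarith [hc]
  intro k _; exact key k
end

section
/- With P_c, P_d constructed from relaxed inputs via positive/negative parts of the net power as above, the exact and relaxed SoC trajectories satisfy E[k] − E^r[k] = Δt·(1/η_d − η_c)·Σ_{j<k} min(P_c^r[j], P_d^r[j]) for all k, which is nonnegative when η_c, η_d ∈ (0,1] and the inputs are nonnegative. -/
/-- Exact minus relaxed trajectory equals the accumulated simultaneous
charge/discharge, which is nonnegative. -/
theorem exact_sub_relaxed_eq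
    (Δt ηc ηd E0 : ℝ) (Pc Pd Pcr Pdr E Er : ℕ → ℝ)
    (hΔt : 0 < Δt) (hηc : 0 < ηc) (hηc1 : ηc ≤ 1)
    (hηd : 0 < ηd) (hηd1 : ηd ≤ 1)
    (hPcr : ∀ k, 0 ≤ Pcr k) (hPdr : ∀ k, 0 ≤ Pdr k)
    (hPc : ∀ k, Pc k = max 0 (Pcr k - Pdr k))
    (hPd : ∀ k, Pd k = max 0 (-(Pcr k - Pdr k)))
    (hE0 : E 0 = E0) (hEr0 : Er 0 = E0)
    (hE : ∀ k, E (k+1) = E k + Δt * ηc * Pc k - (Δt / ηd) * Pd k)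
    (hEr : ∀ k, Er (k+1) = Er k + Δt * ηc * Pcr k - (Δt / ηd) * Pdr k) :
    ∀ k, E k - Er k = Δt * (1 / ηd - ηc) * ∑ j ∈ Finset.range k, min (Pcr j) (Pdr j) ∧
      0 ≤ E k - Er k := by
  have hcoef : 0 ≤ Δt * (1 / ηd - ηc) := by
    apply mul_nonneg hΔt.le
    have : ηc ≤ 1 / ηd := le_trans hηc1 ((le_div_iff₀ hηd).mpr (by linarith))
    linarith
  intro k
  induction k with
  | zero =>
    simp [hE0, hEr0]
  | succ k ih =>
    have hmin : 0 ≤ min (Pcr k) (Pdr k) := le_min (hPcr k) (hPdr k)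
    have hsum : 0 ≤ ∑ j ∈ Finset.range k, min (Pcr j) (Pdr j) :=
      Finset.sum_nonneg fun j _ => le_min (hPcr j) (hPdr j)
    have key : E (k+1) - Er (k+1) =
        Δt * (1 / ηd - ηc) * ∑ j ∈ Finset.range (k+1), min (Pcr j) (Pdr j) := by
      rw [hE k, hEr k, Finset.sum_range_succ]
      rcases le_total (Pcr k) (Pdr k) with h | h
      · have h1 : Pc k = 0 := by rw [hPc k]; simp [max_eq_left]; linarith
        have h2 : Pd k = Pdr k - Pcr k := by
          rw [hPd k]; rw [max_eq_right] <;> linarith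
        have h3 : min (Pcr k) (Pdr k) = Pcr k := min_eq_left h
        rw [h1, h2, h3]
        linear_combination ih.1
      · have h1 : Pc k = Pcr k - Pdr k := by rw [hPc k]; rw [max_eq_right] <;> linarith
        have h2 : Pd k = 0 := by rw [hPd k]; simp [max_eq_left]; linarith
        have h3 : min (Pcr k) (Pdr k) = Pdr k := min_eq_right h
        rw [h1, h2, h3]
        linear_combination ih.1
    refine ⟨key, ?_⟩
    rw [key]
    exact mul_nonneg hcoef (Finset.sum_nonneg fun j _ => le_min (hPcr j) (hPdr j))
end

section
/- If 0 ≤ P_c^r[k], 0 ≤ P_d^r[k], and P_c^r[k] + P_d^r[k] ≤ P_max for all k, then min(P_c^r[k], P_d^r[k]) ≤ P_max/2, and consequently the relaxed-model mismatch satisfies E[k] − E^r[k] ≤ Δt·(1/η_d − η_c)·k·P_max/2 for all k, where η_c,η_d ∈ (0,1]. -/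
/-- With the cutting plane, the relaxed-model mismatch is halved. -/
theorem relaxed_mismatch_bound_cutting_plane
    (Δt ηc ηd E0 Pmax : ℝ) (Pc Pd Pcr Pdr E Er : ℕ → ℝ)
    (hΔt : 0 < Δt) (hηc : 0 < ηc) (hηc1 : ηc ≤ 1)
    (hηd : 0 < ηd) (hηd1 : ηd ≤ 1)
    (hPcr : ∀ k, 0 ≤ Pcr k) (hPdr : ∀ k, 0 ≤ Pdr k)
    (hcut : ∀ k, Pcr k + Pdr k ≤ Pmax)
    (hPc : ∀ k, Pc k = max 0 (Pcr k - Pdr k))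
    (hPd : ∀ k, Pd k = max 0 (-(Pcr k - Pdr k)))
    (hE0 : E 0 = E0) (hEr0 : Er 0 = E0)
    (hE : ∀ k, E (k+1) = E k + Δt * ηc * Pc k - (Δt / ηd) * Pd k)
    (hEr : ∀ k, Er (k+1) = Er k + Δt * ηc * Pcr k - (Δt / ηd) * Pdr k) :
    (∀ k, min (Pcr k) (Pdr k) ≤ Pmax / 2) ∧
      ∀ k, E k - Er k ≤ Δt * (1 / ηd - ηc) * k * Pmax / 2 := by
  have hmin : ∀ k, min (Pcr k) (Pdr k) ≤ Pmax / 2 := by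
    intro k
    have h := hcut k
    rcases le_total (Pcr k) (Pdr k) with h1 | h1
    · rw [min_eq_left h1]; linarith
    · rw [min_eq_right h1]; linarith
  refine ⟨hmin, ?_⟩
  have hfac : 0 ≤ Δt * (1 / ηd - ηc) := by
    have : ηc ≤ 1 / ηd := le_trans hηc1 (by
      rw [le_div_iff₀ hηd]; nlinarith)
    nlinarith
  have hstep : ∀ k, E (k+1) - Er (k+1)
      = (E k - Er k) + Δt * (1 / ηd - ηc) * min (Pcr k) (Pdr k) := by
    intro k
    have hPck : Pc k - Pcr k = -min (Pcr k) (Pdr k) := by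
      rw [hPc k]
      rcases le_total (Pdr k) (Pcr k) with h1 | h1
      · rw [max_eq_right (by linarith), min_eq_right h1]; ring
      · rw [max_eq_left (by linarith), min_eq_left h1]; ring
    have hPdk : Pd k - Pdr k = -min (Pcr k) (Pdr k) := by
      rw [hPd k]
      rcases le_total (Pdr k) (Pcr k) with h1 | h1
      · rw [max_eq_left (by linarith), min_eq_right h1]; ring
      · rw [max_eq_right (by linarith), min_eq_left h1]; ring
    have hd : Δt / ηd = Δt * (1 / ηd) := by ring
    rw [hE k, hEr k, hd]
    linear_combination (Δt * ηc) * hPck - (Δt * (1/ηd)) * hPdk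
  intro k
  induction k with
  | zero => simp [hE0, hEr0]
  | succ n ih =>
    have hn : min (Pcr n) (Pdr n) ≤ Pmax / 2 := hmin n
    have h0 : 0 ≤ min (Pcr n) (Pdr n) := le_min (hPcr n) (hPdr n)
    have := hstep n
    push_cast
    push_cast at ih
    nlinarith [mul_le_mul_of_nonneg_left hn hfac]
end

section
/- Let η = (η_c + 1/η_d)/2 and α = (1/η_d − η_c)/2. If P_c[k], P_d[k] ≥ 0 and P_c[k]·P_d[k] = 0 for all k, then the simplified-model mismatch satisfies E^s[k] − E[k] = α·Δt·Σ_{j<k} |P_b[j]| where P_b[j] = P_c[j] − P_d[j]. -/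
/-- Simplified-model mismatch under the midpoint efficiency choice. -/
theorem simplified_mismatch_eq
    (Δt ηc ηd E0 : ℝ) (Pc Pd E Es : ℕ → ℝ)
    (hΔt : 0 < Δt) (hηc : 0 < ηc) (hηc1 : ηc ≤ 1)
    (hηd : 0 < ηd) (hηd1 : ηd ≤ 1)
    (hPc : ∀ k, 0 ≤ Pc k) (hPd : ∀ k, 0 ≤ Pd k)
    (hcomp : ∀ k, Pc k * Pd k = 0)
    (hE0 : E 0 = E0) (hEs0 : Es 0 = E0)
    (hE : ∀ k, E (k+1) = E k + Δt * ηc * Pc k - (Δt / ηd) * Pd k)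
    (hEs : ∀ k, Es (k+1) = Es k + ((ηc + 1 / ηd) / 2) * Δt * (Pc k - Pd k)) :
    ∀ k, Es k - E k =
      ((1 / ηd - ηc) / 2) * Δt * ∑ j ∈ Finset.range k, |Pc j - Pd j| := by
  intro k
  induction k with
  | zero => simp [hE0, hEs0]
  | succ n ih =>
    rw [Finset.sum_range_succ, hE, hEs]
    rcases mul_eq_zero.mp (hcomp n) with h | h
    · rw [h, abs_of_nonpos (by linarith [hPd n])]
      linear_combination ih
    · rw [h, abs_of_nonneg (by linarith [hPc n])]
      linear_combination ih
end

section
/- Under the hypotheses of the previous statement, if additionally |P_b[k]| ≤ P_max for all k, then E^s[k] − E[k] ≤ (1/η_d − η_c)·Δt·k·P_max/2 for all k. -/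
/-- Worst-case simplified-model mismatch bound. -/
theorem simplified_mismatch_bound
    (Δt ηc ηd E0 Pmax : ℝ) (Pc Pd E Es : ℕ → ℝ)
    (hΔt : 0 < Δt) (hηc : 0 < ηc) (hηc1 : ηc ≤ 1)
    (hηd : 0 < ηd) (hηd1 : ηd ≤ 1)
    (hPc : ∀ k, 0 ≤ Pc k) (hPd : ∀ k, 0 ≤ Pd k)
    (hcomp : ∀ k, Pc k * Pd k = 0)
    (hPb : ∀ k, |Pc k - Pd k| ≤ Pmax)
    (hE0 : E 0 = E0) (hEs0 : Es 0 = E0)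
    (hE : ∀ k, E (k+1) = E k + Δt * ηc * Pc k - (Δt / ηd) * Pd k)
    (hEs : ∀ k, Es (k+1) = Es k + ((ηc + 1 / ηd) / 2) * Δt * (Pc k - Pd k)) :
    ∀ k, Es k - E k ≤ (1 / ηd - ηc) * Δt * k * Pmax / 2 := by
  have hcoef : 0 ≤ 1 / ηd - ηc := by
    have : (1:ℝ) ≤ 1 / ηd := by
      rw [le_div_iff₀ hηd]; linarith
    linarith
  intro k
  induction k with
  | zero => simp [hE0, hEs0]
  | succ k ih =>
      have hsum : Pc k + Pd k = |Pc k - Pd k| := by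
        rcases mul_eq_zero.mp (hcomp k) with h | h
        · rw [h]; rw [abs_of_nonpos (by linarith [hPd k])]; ring
        · rw [h]; rw [abs_of_nonneg (by linarith [hPc k])]; ring
      have hsumle : Pc k + Pd k ≤ Pmax := hsum ▸ hPb k
      have hstep : Es (k+1) - E (k+1)
          = (Es k - E k) + (1 / ηd - ηc) / 2 * Δt * (Pc k + Pd k) := by
        rw [hE k, hEs k]
        field_simp
        ring
      rw [hstep]
      have hinc : (1 / ηd - ηc) / 2 * Δt * (Pc k + Pd k)
          ≤ (1 / ηd - ηc) * Δt * Pmax / 2 := by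
        have h1 : 0 ≤ (1 / ηd - ηc) / 2 * Δt := by positivity
        have := mul_le_mul_of_nonneg_left hsumle h1
        nlinarith
      push_cast [Nat.cast_succ]
      nlinarith [ih]
end

section
/- Let Δ[k] = E^s[k] − E^r[k] be the gap between the simplified upper-bound trajectory and the relaxed lower-bound trajectory driven by the same inputs P_c, P_d ≥ 0 with η = (η_c + 1/η_d)/2 and complementarity P_c[k]·P_d[k]=0. Then Δ[k] = α·Δt·Σ_{j<k}|P_b[j]| + Δt·(1/η_d − η_c)·Σ_{j<k} min(P_c[j],P_d[j]) = α·Δt·Σ_{j<k}|P_b[j]| (the second term vanishes under complementarity), where α = (1/η_d−η_c)/2. -/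
/-- Gap between the simplified upper bound and the relaxed lower bound. -/
theorem simplified_relaxed_gap
    (Δt ηc ηd E0 : ℝ) (Pc Pd Es Er : ℕ → ℝ)
    (hΔt : 0 < Δt) (hηc : 0 < ηc) (hηc1 : ηc ≤ 1)
    (hηd : 0 < ηd) (hηd1 : ηd ≤ 1)
    (hPc : ∀ k, 0 ≤ Pc k) (hPd : ∀ k, 0 ≤ Pd k)
    (hcomp : ∀ k, Pc k * Pd k = 0)
    (hEs0 : Es 0 = E0) (hEr0 : Er 0 = E0)
    (hEs : ∀ k, Es (k+1) = Es k + ((ηc + 1 / ηd) / 2) * Δt * (Pc k - Pd k))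
    (hEr : ∀ k, Er (k+1) = Er k + Δt * ηc * Pc k - (Δt / ηd) * Pd k) :
    ∀ k, Es k - Er k =
        ((1 / ηd - ηc) / 2) * Δt * (∑ j ∈ Finset.range k, |Pc j - Pd j|) +
          Δt * (1 / ηd - ηc) * (∑ j ∈ Finset.range k, min (Pc j) (Pd j)) ∧
      Es k - Er k = ((1 / ηd - ηc) / 2) * Δt * ∑ j ∈ Finset.range k, |Pc j - Pd j| := by

  have hmin : ∀ k, min (Pc k) (Pd k) = 0 := by
    intro k
    rcases mul_eq_zero.mp (hcomp k) with h | h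
    · simp [h, min_eq_left, hPd k]
    · simp [h, min_eq_right, hPc k]
  have habs : ∀ k, |Pc k - Pd k| = Pc k + Pd k := by
    intro k
    rcases mul_eq_zero.mp (hcomp k) with h | h
    · rw [h]; rw [abs_of_nonpos (by linarith [hPd k])]; ring
    · rw [h]; rw [abs_of_nonneg (by linarith [hPc k])]; ring
  have key : ∀ k, Es k - Er k =
      ((1 / ηd - ηc) / 2) * Δt * ∑ j ∈ Finset.range k, |Pc j - Pd j| := by
    intro k
    induction k with
    | zero => simp [hEs0, hEr0]
    | succ n ih =>
      rw [hEs n, hEr n, Finset.sum_range_succ, habs n]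
      linear_combination ih
  intro k
  refine ⟨?_, key k⟩
  have : ∑ j ∈ Finset.range k, min (Pc j) (Pd j) = 0 := by
    apply Finset.sum_eq_zero; intro j _; exact hmin j
  rw [this, key k]; ring
end

section
/- If P_c^r[k], P_d^r[k] ∈ [0, P_max], then (without the cutting plane) min(P_c^r[k], P_d^r[k]) ≤ P_max, hence the relaxed-model mismatch obeys E[k] − E^r[k] ≤ Δt·(1/η_d − η_c)·k·P_max; adding the constraint P_c^r[k]+P_d^r[k] ≤ P_max halves this bound to Δt·(1/η_d − η_c)·k·P_max/2. -/
/-- Relaxed-model mismatch bounds, without and with the cutting plane. -/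
theorem relaxed_mismatch_bounds
    (Δt ηc ηd E0 Pmax : ℝ) (Pc Pd Pcr Pdr E Er : ℕ → ℝ)
    (hΔt : 0 < Δt) (hηc : 0 < ηc) (hηc1 : ηc ≤ 1)
    (hηd : 0 < ηd) (hηd1 : ηd ≤ 1) (hPmax : 0 ≤ Pmax)
    (hPcr : ∀ k, 0 ≤ Pcr k) (hPcr' : ∀ k, Pcr k ≤ Pmax)
    (hPdr : ∀ k, 0 ≤ Pdr k) (hPdr' : ∀ k, Pdr k ≤ Pmax)
    (hPc : ∀ k, Pc k = max 0 (Pcr k - Pdr k))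
    (hPd : ∀ k, Pd k = max 0 (-(Pcr k - Pdr k)))
    (hE0 : E 0 = E0) (hEr0 : Er 0 = E0)
    (hE : ∀ k, E (k+1) = E k + Δt * ηc * Pc k - (Δt / ηd) * Pd k)
    (hEr : ∀ k, Er (k+1) = Er k + Δt * ηc * Pcr k - (Δt / ηd) * Pdr k) :
    (∀ k, min (Pcr k) (Pdr k) ≤ Pmax) ∧
    (∀ k, E k - Er k ≤ Δt * (1 / ηd - ηc) * k * Pmax) ∧
    ((∀ k, Pcr k + Pdr k ≤ Pmax) →
      ∀ k, E k - Er k ≤ Δt * (1 / ηd - ηc) * k * Pmax / 2) := by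
  have hcoef : 0 ≤ Δt * (1 / ηd - ηc) := by
    apply mul_nonneg hΔt.le
    have : (1:ℝ) ≤ 1 / ηd := by
      rw [le_div_iff₀ hηd]; linarith
    linarith
  -- exact mismatch formula
  have key : ∀ k, E k - Er k =
      Δt * (1 / ηd - ηc) * ∑ j ∈ Finset.range k, min (Pcr j) (Pdr j) := by
    intro k
    induction k with
    | zero => simp [hE0, hEr0]
    | succ n ih =>
      rw [hE n, hEr n, Finset.sum_range_succ, hPc n, hPd n]
      rcases le_total (Pcr n) (Pdr n) with h | h
      · rw [min_eq_left h, max_eq_left (by linarith), max_eq_right (by linarith)]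
        field_simp at ih ⊢
        nlinarith [ih]
      · rw [min_eq_right h, max_eq_right (by linarith), max_eq_left (by linarith)]
        field_simp at ih ⊢
        nlinarith [ih]
  refine ⟨fun k => le_trans (min_le_left _ _) (hPcr' k), ?_, ?_⟩
  · intro k
    rw [key k]
    have hsum : ∑ j ∈ Finset.range k, min (Pcr j) (Pdr j) ≤ k * Pmax := by
      calc ∑ j ∈ Finset.range k, min (Pcr j) (Pdr j)
          ≤ ∑ j ∈ Finset.range k, Pmax :=
            Finset.sum_le_sum (fun j _ => le_trans (min_le_left _ _) (hPcr' j))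
        _ = k * Pmax := by simp [mul_comm]
    calc Δt * (1 / ηd - ηc) * ∑ j ∈ Finset.range k, min (Pcr j) (Pdr j)
        ≤ Δt * (1 / ηd - ηc) * (k * Pmax) := mul_le_mul_of_nonneg_left hsum hcoef
      _ = Δt * (1 / ηd - ηc) * k * Pmax := by ring
  · intro hcut k
    rw [key k]
    have hsum : ∑ j ∈ Finset.range k, min (Pcr j) (Pdr j) ≤ k * (Pmax / 2) := by
      calc ∑ j ∈ Finset.range k, min (Pcr j) (Pdr j)
          ≤ ∑ j ∈ Finset.range k, Pmax / 2 := by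
            refine Finset.sum_le_sum (fun j _ => ?_)
            have := hcut j
            rcases le_total (Pcr j) (Pdr j) with h | h
            · rw [min_eq_left h]; linarith
            · rw [min_eq_right h]; linarith
        _ = k * (Pmax / 2) := by simp [mul_comm]
    calc Δt * (1 / ηd - ηc) * ∑ j ∈ Finset.range k, min (Pcr j) (Pdr j)
        ≤ Δt * (1 / ηd - ηc) * (k * (Pmax / 2)) := mul_le_mul_of_nonneg_left hsum hcoef
      _ = Δt * (1 / ηd - ηc) * k * Pmax / 2 := by ring
end

section
/- If simultaneous charging and discharging occurs at some step j < k (i.e., min(P_c^r[j], P_d^r[j]) > 0) and η_c·η_d < 1, then the relaxed trajectory strictly underestimates the exact one at time k: E^r[k] < E[k]. -/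
/-- Strict underestimation under simultaneous charging and discharging. -/
theorem relaxed_strictly_below
    (Δt ηc ηd E0 : ℝ) (Pc Pd Pcr Pdr E Er : ℕ → ℝ) (k j : ℕ)
    (hΔt : 0 < Δt) (hηc : 0 < ηc) (hηc1 : ηc ≤ 1)
    (hηd : 0 < ηd) (hηd1 : ηd ≤ 1) (hrt : ηc * ηd < 1)
    (hPcr : ∀ k, 0 ≤ Pcr k) (hPdr : ∀ k, 0 ≤ Pdr k)
    (hPc : ∀ k, Pc k = max 0 (Pcr k - Pdr k))
    (hPd : ∀ k, Pd k = max 0 (-(Pcr k - Pdr k)))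
    (hE0 : E 0 = E0) (hEr0 : Er 0 = E0)
    (hE : ∀ k, E (k+1) = E k + Δt * ηc * Pc k - (Δt / ηd) * Pd k)
    (hEr : ∀ k, Er (k+1) = Er k + Δt * ηc * Pcr k - (Δt / ηd) * Pdr k)
    (hjk : j < k) (hscd : 0 < min (Pcr j) (Pdr j)) :
    Er k < E k := by
  have hc : 0 < 1 / ηd - ηc := by
    rw [sub_pos, lt_div_iff₀ hηd]
    exact hrt
  have key : ∀ n, E n - Er n =
      Δt * (1 / ηd - ηc) * ∑ m ∈ Finset.range n, min (Pcr m) (Pdr m) := by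
    intro n
    induction n with
    | zero => simp [hE0, hEr0]
    | succ i ih =>
      rw [Finset.sum_range_succ, hE i, hEr i, hPc i, hPd i]
      rcases le_total (Pdr i) (Pcr i) with h | h
      · rw [min_eq_right h, max_eq_right (by linarith), max_eq_left (by linarith)]
        field_simp at ih ⊢
        nlinarith [ih]
      · rw [min_eq_left h, max_eq_left (by linarith), max_eq_right (by linarith)]
        field_simp at ih ⊢
        nlinarith [ih]
  have hsum : 0 < ∑ m ∈ Finset.range k, min (Pcr m) (Pdr m) := by
    apply Finset.sum_pos' (fun m _ => le_min (hPcr m) (hPdr m))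
    exact ⟨j, Finset.mem_range.mpr hjk, hscd⟩
  have := key k
  nlinarith [mul_pos hΔt hc]
end
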